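/- arXiv:1210.4235 — 5 statements merged into one kernel-verified Lean document; each statement's English description precedes it below -/
import Mathlib

section
/- Let L be a normal real n×n matrix with L·1 = 0 and suppose 0 is a simple eigenvalue of L with all other eigenvalues having positive real part. Then for every k, the integral ∫₀^t ‖exp(-L^T s)·e_k‖² ds equals t/n + ∑_{p=2}^n (1 - exp(-2 Re(λ_p) t))/(2 Re(λ_p)) |u^{(p)}_k|², where λ_p are the nonzero eigenvalues of L and u^{(p)} the corresponding orthonormal eigenvectors, and e_k is the k-th standard basis vector. -/
open Matrix Finset

open NormedSpace in
lemma key_pointwise {n : ℕ} [NeZero n]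
    (L : Matrix (Fin n) (Fin n) ℝ)
    (lam : Fin n → ℂ) (u : Fin n → Fin n → ℂ)
    (horth : ∀ p q, ∑ i, starRingEnd ℂ (u p i) * u q i = if p = q then 1 else 0)
    (heig : ∀ p, (L.map Complex.ofReal) *ᵥ u p = lam p • u p)
    (k : Fin n) (s : ℝ) :
    ∑ ℓ, ((exp (-(s • Lᵀ))) *ᵥ (Pi.single k 1)) ℓ ^ 2
      = ∑ p, Real.exp (-(2 * (lam p).re * s)) * ‖u p k‖ ^ 2 := by
  classical
  set Lc : Matrix (Fin n) (Fin n) ℂ := L.map Complex.ofReal with hLc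
  set U : Matrix (Fin n) (Fin n) ℂ := Matrix.of (fun i p => u p i) with hU
  have hUU : Uᴴ * U = 1 := by
    ext p q
    simpa [Matrix.mul_apply, Matrix.conjTranspose_apply, Matrix.one_apply, hU] using horth p q
  have hUU' : U * Uᴴ = 1 := mul_eq_one_comm.mp hUU
  have hUinv : U⁻¹ = Uᴴ := Matrix.inv_eq_right_inv hUU'
  have hUunit : IsUnit U := ⟨⟨U, Uᴴ, hUU', hUU⟩, rfl⟩
  have hLU : Lc * U = U * Matrix.diagonal lam := by
    ext i p
    have h := congrFun (heig p) i
    simp only [Matrix.mulVec, dotProduct, Pi.smul_apply, smul_eq_mul] at h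
    have hrhs : (U * Matrix.diagonal lam) i p = u p i * lam p := by
      simp [hU, Matrix.mul_diagonal]
    have hlhs : (Lc * U) i p = ∑ j, Lc i j * u p j := by
      simp [Matrix.mul_apply, hU]
    rw [hlhs, hrhs, h, mul_comm]
  have hL : Lc = U * Matrix.diagonal lam * Uᴴ := by
    calc Lc = Lc * (U * Uᴴ) := by rw [hUU', mul_one]
    _ = (Lc * U) * Uᴴ := by rw [mul_assoc]
    _ = U * Matrix.diagonal lam * Uᴴ := by rw [hLU]
  set F : Matrix (Fin n) (Fin n) ℝ := exp (-(s • L)) with hF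
  have hterm : ∀ ℓ, ((exp (-(s • Lᵀ))) *ᵥ (Pi.single k 1)) ℓ = F k ℓ := by
    intro ℓ
    have h1 : -(s • Lᵀ) = (-(s • L))ᵀ := by
      rw [Matrix.transpose_neg, Matrix.transpose_smul]
    rw [h1, Matrix.exp_transpose]
    simp [Matrix.mulVec, dotProduct, Pi.single_apply, mul_ite, hF]
  set G : Matrix (Fin n) (Fin n) ℂ := F.map Complex.ofReal with hG
  have hGexp : G = exp (-(s • Lc)) := by
    letI : SeminormedRing (Matrix (Fin n) (Fin n) ℝ) := Matrix.linftyOpSemiNormedRing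
    letI : NormedRing (Matrix (Fin n) (Fin n) ℝ) := Matrix.linftyOpNormedRing
    letI : NormedAlgebra ℝ (Matrix (Fin n) (Fin n) ℝ) := Matrix.linftyOpNormedAlgebra
    letI : SeminormedRing (Matrix (Fin n) (Fin n) ℂ) := Matrix.linftyOpSemiNormedRing
    letI : NormedRing (Matrix (Fin n) (Fin n) ℂ) := Matrix.linftyOpNormedRing
    letI : NormedAlgebra ℝ (Matrix (Fin n) (Fin n) ℂ) := Matrix.linftyOpNormedAlgebra
    letI : NormedAlgebra ℚ (Matrix (Fin n) (Fin n) ℝ) := Matrix.linftyOpNormedAlgebra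
    letI : NormedAlgebra ℚ (Matrix (Fin n) (Fin n) ℂ) := Matrix.linftyOpNormedAlgebra
    have hcont : Continuous (fun M : Matrix (Fin n) (Fin n) ℝ =>
        (Complex.ofRealHom.mapMatrix M : Matrix (Fin n) (Fin n) ℂ)) := by
      simp only [RingHom.mapMatrix_apply]
      exact Continuous.matrix_map continuous_id Complex.continuous_ofReal
    have hme := map_exp (Complex.ofRealHom.mapMatrix (m := Fin n)) hcont (-(s • L))
    simp only [RingHom.mapMatrix_apply] at hme
    have hco : (⇑Complex.ofRealHom : ℝ → ℂ) = Complex.ofReal := rfl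
    rw [hco] at hme
    rw [hG, hF]
    refine hme.trans ?_
    congr 1
    ext i j
    simp [hLc, Matrix.map_apply, Complex.real_smul]
  have hGdiag : G = U * Matrix.diagonal (fun p => Complex.exp (-(s • lam p))) * Uᴴ := by
    rw [hGexp]
    have h2 : -(s • Lc) = U * (-(s • Matrix.diagonal lam)) * U⁻¹ := by
      rw [hUinv, hL]
      simp [Matrix.mul_smul, Matrix.smul_mul, Matrix.neg_mul, Matrix.mul_neg]
    rw [h2, Matrix.exp_conj U _ hUunit, hUinv]
    have h3 : -(s • Matrix.diagonal lam) = Matrix.diagonal (fun p => -(s • lam p)) := by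
      rw [← Matrix.diagonal_smul, ← Matrix.diagonal_neg]
      rfl
    rw [h3, Matrix.exp_diagonal]
    have hd : exp (fun p => -(s • lam p)) = fun p => Complex.exp (-(s • lam p)) := by
      funext p
      rw [Pi.coe_exp]
      exact (congrFun Complex.exp_eq_exp_ℂ _).symm
    rw [hd]
  have hdd : Matrix.diagonal (fun p => Complex.exp (-(s • lam p))) *
        (Matrix.diagonal (fun p => Complex.exp (-(s • lam p))))ᴴ
      = Matrix.diagonal (fun p => ((Real.exp (-(2 * (lam p).re * s)) : ℝ) : ℂ)) := by
    rw [Matrix.diagonal_conjTranspose, Matrix.diagonal_mul_diagonal]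
    refine congrArg Matrix.diagonal (funext fun p => ?_)
    simp only [Pi.star_apply, Complex.star_def]
    rw [Complex.mul_conj]
    norm_cast
    rw [Complex.normSq_eq_norm_sq, Complex.norm_exp, sq, ← Real.exp_add]
    congr 1
    simp only [Complex.real_smul, Complex.neg_re, Complex.mul_re, Complex.ofReal_re,
      Complex.ofReal_im]
    ring
  have hGG : G * Gᴴ
      = U * Matrix.diagonal (fun p => ((Real.exp (-(2 * (lam p).re * s)) : ℝ) : ℂ)) * Uᴴ := by
    rw [hGdiag]
    simp only [Matrix.conjTranspose_mul, Matrix.conjTranspose_conjTranspose, ← mul_assoc]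
    rw [mul_assoc (U * Matrix.diagonal fun p => Complex.exp (-(s • lam p))) Uᴴ U, hUU, mul_one]
    rw [mul_assoc U (Matrix.diagonal fun p => Complex.exp (-(s • lam p)))
      (Matrix.diagonal fun p => Complex.exp (-(s • lam p)))ᴴ, hdd]
  have hdiagentry : (G * Gᴴ) k k
      = ((∑ p, Real.exp (-(2 * (lam p).re * s)) * ‖u p k‖ ^ 2 : ℝ) : ℂ) := by
    rw [hGG, Matrix.mul_apply, Complex.ofReal_sum]
    refine Finset.sum_congr rfl fun p _ => ?_
    rw [Matrix.mul_diagonal, Matrix.conjTranspose_apply]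
    have hUk : U k p = u p k := rfl
    rw [hUk, Complex.star_def]
    calc u p k * ((Real.exp (-(2 * (lam p).re * s)) : ℝ) : ℂ) * starRingEnd ℂ (u p k)
        = ((Real.exp (-(2 * (lam p).re * s)) : ℝ) : ℂ) * (u p k * starRingEnd ℂ (u p k)) := by
          ring
      _ = ((Real.exp (-(2 * (lam p).re * s)) : ℝ) : ℂ) * ((Complex.normSq (u p k) : ℝ) : ℂ) := by
          rw [Complex.mul_conj]
      _ = ((Real.exp (-(2 * (lam p).re * s)) * ‖u p k‖ ^ 2 : ℝ) : ℂ) := by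
          rw [Complex.normSq_eq_norm_sq]
          push_cast
          ring
  have hsq : ((∑ ℓ, F k ℓ ^ 2 : ℝ) : ℂ) = (G * Gᴴ) k k := by
    rw [Matrix.mul_apply, Complex.ofReal_sum]
    refine Finset.sum_congr rfl fun ℓ _ => ?_
    rw [Matrix.conjTranspose_apply]
    have h1 : G k ℓ = ((F k ℓ : ℝ) : ℂ) := rfl
    rw [h1, Complex.star_def, Complex.conj_ofReal]
    push_cast
    ring
  have hmain := Complex.ofReal_injective (hsq.trans hdiagentry)
  calc ∑ ℓ, ((exp (-(s • Lᵀ))) *ᵥ (Pi.single k 1)) ℓ ^ 2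
      = ∑ ℓ, F k ℓ ^ 2 := Finset.sum_congr rfl fun ℓ _ => by rw [hterm ℓ]
    _ = _ := hmain

/-- For a normal Laplacian `L` with `L·1 = 0`, zero a simple eigenvalue (the
eigenvalue of index `0`) and all other eigenvalues with positive real part,
the integral `∫₀ᵗ ‖exp(-Lᵀ s)·e_k‖² ds` equals
`t/n + ∑_{p≠0} (1 - e^{-2 Re(λ_p) t})/(2 Re(λ_p)) |u⁽ᵖ⁾_k|²`,
where `λ_p, u⁽ᵖ⁾` is an orthonormal eigendecomposition of `L` over `ℂ`. -/
theorem variance_integral_eq_of_normal_laplacian {n : ℕ} [NeZero n]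
    (L : Matrix (Fin n) (Fin n) ℝ) (hnormal : L * Lᵀ = Lᵀ * L)
    (hL1 : L *ᵥ (fun _ => (1 : ℝ)) = 0)
    (lam : Fin n → ℂ) (u : Fin n → Fin n → ℂ)
    (horth : ∀ p q, ∑ i, starRingEnd ℂ (u p i) * u q i = if p = q then 1 else 0)
    (heig : ∀ p, (L.map Complex.ofReal) *ᵥ u p = lam p • u p)
    (hlam0 : lam 0 = 0)
    (hu0 : u 0 = fun _ => (((Real.sqrt n)⁻¹ : ℝ) : ℂ))
    (hre : ∀ p, p ≠ 0 → 0 < (lam p).re)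
    (k : Fin n) (t : ℝ) (ht : 0 ≤ t) :
    ∫ s in (0 : ℝ)..t,
        ∑ ℓ, ((NormedSpace.exp (-(s • Lᵀ))) *ᵥ (Pi.single k 1)) ℓ ^ 2
      = t / n + ∑ p ∈ Finset.univ.erase 0,
          (1 - Real.exp (-(2 * (lam p).re * t))) / (2 * (lam p).re) *
            ‖u p k‖ ^ 2 := by
  have key := key_pointwise L lam u horth heig k
  rw [intervalIntegral.integral_congr
    (g := fun s => ∑ p, Real.exp (-(2 * (lam p).re * s)) * ‖u p k‖ ^ 2)
    (fun s _ => key s)]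
  have hInt : ∀ p ∈ (Finset.univ : Finset (Fin n)),
      IntervalIntegrable (fun s => Real.exp (-(2 * (lam p).re * s)) * ‖u p k‖ ^ 2)
        MeasureTheory.volume 0 t := fun p _ =>
    ((Real.continuous_exp.comp (by continuity)).mul continuous_const).intervalIntegrable _ _
  rw [intervalIntegral.integral_finset_sum hInt,
    ← Finset.add_sum_erase _ _ (Finset.mem_univ (0 : Fin n))]
  have hn : (0:ℝ) < n := by
    have := Nat.pos_of_ne_zero (NeZero.ne n)
    exact_mod_cast this
  congr 1
  · have h0 : ∀ s : ℝ, s ∈ Set.uIcc (0:ℝ) t →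
        Real.exp (-(2 * (lam 0).re * s)) * ‖u 0 k‖ ^ 2 = (n:ℝ)⁻¹ := by
      intro s _
      rw [hlam0]
      have habs : ‖u 0 k‖ = (Real.sqrt n)⁻¹ := by
        rw [hu0]
        rw [Complex.norm_real, Real.norm_eq_abs, abs_of_nonneg (inv_nonneg.2 (Real.sqrt_nonneg _))]
      rw [habs]
      simp only [Complex.zero_re, mul_zero, zero_mul, neg_zero, Real.exp_zero, one_mul]
      rw [inv_pow, Real.sq_sqrt (le_of_lt hn)]
    rw [intervalIntegral.integral_congr h0]
    rw [intervalIntegral.integral_const]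
    simp only [smul_eq_mul, sub_zero]
    rw [div_eq_mul_inv]
  · refine Finset.sum_congr rfl fun p hp => ?_
    have ha : 0 < (lam p).re := hre p (Finset.ne_of_mem_erase hp)
    set a := (lam p).re with hadef
    have hc : (-(2 * a)) ≠ 0 := by
      have : 0 < 2 * a := by linarith
      linarith
    have heq : ∀ s : ℝ, s ∈ Set.uIcc (0:ℝ) t →
        Real.exp (-(2 * a * s)) * ‖u p k‖ ^ 2
          = Real.exp ((-(2 * a)) * s) * ‖u p k‖ ^ 2 := by
      intro s _; ring_nf
    rw [intervalIntegral.integral_congr heq, intervalIntegral.integral_mul_const]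
    rw [intervalIntegral.integral_comp_mul_left Real.exp hc, integral_exp]
    have h2a : (2 * a) ≠ 0 := by positivity
    have harg : (-(2 * a)) * t = -(2 * a * t) := by ring
    rw [mul_zero, Real.exp_zero, smul_eq_mul, harg]
    field_simp
    ring
end

section
/- Let L be a normal real n×n matrix with L·1 = 0, 0 a simple eigenvalue, and all other eigenvalues with positive real part. Then for each k, the limit as t → ∞ of ( (k,k) entry of ∫₀^t exp(-Ls) exp(-L^T s) ds − t/n ) exists and equals ∑_{p=2}^n |u^{(p)}_k|² / (2 Re(λ_p)), where λ_p, u^{(p)} are the nonzero eigenvalues and corresponding orthonormal eigenvectors of L. -/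
open Matrix Finset Filter

private lemma int_exp_neg (a : ℝ) (ha : a ≠ 0) (t : ℝ) :
    ∫ s in (0:ℝ)..t, Real.exp (-(a * s)) = (1 - Real.exp (-(a * t))) / a := by
  have h : ∀ s ∈ Set.uIcc (0:ℝ) t, HasDerivAt (fun x => -Real.exp (-(a * x)) / a)
      (Real.exp (-(a * s))) s := by
    intro s _
    have h1 : HasDerivAt (fun x : ℝ => -(a * x)) (-a) s := by
      exact ((hasDerivAt_id s).const_mul a).neg.congr_deriv (by ring)
    have h3 := (h1.exp.neg.div_const a)
    exact h3.congr_deriv (by rw [mul_neg, neg_neg, mul_div_assoc, div_self ha, mul_one])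
  have hcont : IntervalIntegrable (fun s => Real.exp (-(a * s))) MeasureTheory.volume 0 t :=
    (Real.continuous_exp.comp (by continuity)).intervalIntegrable _ _
  rw [intervalIntegral.integral_eq_sub_of_hasDerivAt h hcont]
  field_simp
  rw [mul_zero, neg_zero, Real.exp_zero]
  ring

private lemma map_exp_matrix {n : ℕ} (A : Matrix (Fin n) (Fin n) ℝ) :
    (NormedSpace.exp A).map Complex.ofReal
      = NormedSpace.exp (A.map Complex.ofReal) := by
  letI : SeminormedRing (Matrix (Fin n) (Fin n) ℝ) := Matrix.linftyOpSemiNormedRing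
  letI : NormedRing (Matrix (Fin n) (Fin n) ℝ) := Matrix.linftyOpNormedRing
  letI : NormedAlgebra ℝ (Matrix (Fin n) (Fin n) ℝ) := Matrix.linftyOpNormedAlgebra
  letI : SeminormedRing (Matrix (Fin n) (Fin n) ℂ) := Matrix.linftyOpSemiNormedRing
  letI : NormedRing (Matrix (Fin n) (Fin n) ℂ) := Matrix.linftyOpNormedRing
  letI : NormedAlgebra ℝ (Matrix (Fin n) (Fin n) ℂ) := Matrix.linftyOpNormedAlgebra
  letI : NormedAlgebra ℚ (Matrix (Fin n) (Fin n) ℝ) := Matrix.linftyOpNormedAlgebra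
  letI : NormedAlgebra ℚ (Matrix (Fin n) (Fin n) ℂ) := Matrix.linftyOpNormedAlgebra
  have := NormedSpace.map_exp
    (Complex.ofRealHom.mapMatrix : Matrix (Fin n) (Fin n) ℝ →+* Matrix (Fin n) (Fin n) ℂ)
    (continuous_id.matrix_map Complex.continuous_ofReal) A
  simp only [RingHom.mapMatrix_apply] at this
  exact this

private lemma entry_eq {n : ℕ} (L : Matrix (Fin n) (Fin n) ℝ)
    (lam : Fin n → ℂ) (u : Fin n → Fin n → ℂ)
    (horth : ∀ p q, ∑ i, starRingEnd ℂ (u p i) * u q i = if p = q then 1 else 0)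
    (heig : ∀ p, (L.map Complex.ofReal) *ᵥ u p = lam p • u p)
    (k : Fin n) (s : ℝ) :
    ((NormedSpace.exp (-(s • L))) * (NormedSpace.exp (-(s • Lᵀ)))) k k
      = ∑ p, ‖u p k‖ ^ 2 * Real.exp (-(2 * (lam p).re * s)) := by
  classical
  set U : Matrix (Fin n) (Fin n) ℂ := Matrix.of (fun i p => u p i) with hUdef
  have hUU : Uᴴ * U = 1 := by
    ext p q
    simpa [Matrix.mul_apply, Matrix.conjTranspose_apply, Matrix.one_apply, hUdef]
      using horth p q
  have hUU' : U * Uᴴ = 1 := mul_eq_one_comm.mp hUU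
  let Uu : (Matrix (Fin n) (Fin n) ℂ)ˣ := ⟨U, Uᴴ, hUU', hUU⟩
  have hLU : L.map Complex.ofReal * U = U * Matrix.diagonal lam := by
    ext i p
    have h := congrFun (heig p) i
    simp only [Matrix.mulVec, dotProduct, Pi.smul_apply, smul_eq_mul] at h
    rw [Matrix.mul_diagonal]
    simp only [Matrix.mul_apply, hUdef, Matrix.of_apply]
    rw [h]; ring
  have hL : L.map Complex.ofReal = U * Matrix.diagonal lam * Uᴴ := by
    rw [← hLU, Matrix.mul_assoc, hUU', Matrix.mul_one]
  have hLT : Lᵀ.map Complex.ofReal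
      = U * Matrix.diagonal (fun p => starRingEnd ℂ (lam p)) * Uᴴ := by
    have h1 : Lᵀ.map Complex.ofReal = (L.map Complex.ofReal)ᴴ := by
      ext i j
      simp [Matrix.conjTranspose_apply, Complex.conj_ofReal]
    rw [h1, hL]
    simp only [Matrix.conjTranspose_mul, Matrix.conjTranspose_conjTranspose,
      Matrix.diagonal_conjTranspose, Matrix.mul_assoc]
    exact congrArg (fun D => U * (Matrix.diagonal D * Uᴴ))
      (funext fun p => rfl)
  have hconj : ∀ (d : Fin n → ℂ),
      NormedSpace.exp (U * Matrix.diagonal d * Uᴴ)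
        = U * Matrix.diagonal (fun p => Complex.exp (d p)) * Uᴴ := by
    intro d
    have h := Matrix.exp_units_conj Uu (Matrix.diagonal d)
    have h2 : (↑Uu⁻¹ : Matrix (Fin n) (Fin n) ℂ) = Uᴴ := rfl
    rw [h2] at h
    rw [show (↑Uu : Matrix (Fin n) (Fin n) ℂ) = U from rfl] at h
    rw [h, Matrix.exp_diagonal]
    refine congrArg (fun D => U * Matrix.diagonal D * Uᴴ) (funext fun p => ?_)
    rw [Pi.coe_exp d p, ← Complex.exp_eq_exp_ℂ]
  have hsmul : ∀ (M : Matrix (Fin n) (Fin n) ℝ) (d : Fin n → ℂ),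
      M.map Complex.ofReal = U * Matrix.diagonal d * Uᴴ →
      (-(s • M)).map Complex.ofReal = U * Matrix.diagonal (fun p => -(s • d p)) * Uᴴ := by
    intro M d hM
    have h1 : (-(s • M)).map Complex.ofReal = -(s • M.map Complex.ofReal) := by
      ext i j
      simp only [Matrix.map_apply, Matrix.neg_apply, Matrix.smul_apply, smul_eq_mul,
        Complex.ofReal_neg, Complex.ofReal_mul, Complex.real_smul]
    rw [h1, hM]
    have hD : Matrix.diagonal (fun p => -(s • d p)) = -(s • Matrix.diagonal d) := by
      ext i j
      by_cases hij : i = j <;>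
        simp [Matrix.diagonal_apply, hij]
    rw [hD]
    simp [Matrix.mul_smul, Matrix.smul_mul, Matrix.mul_neg, Matrix.neg_mul]
  have hE1 : (NormedSpace.exp (-(s • L))).map Complex.ofReal
      = U * Matrix.diagonal (fun p => Complex.exp (-(s • lam p))) * Uᴴ := by
    rw [map_exp_matrix, hsmul L lam hL, hconj]
  have hE2 : (NormedSpace.exp (-(s • Lᵀ))).map Complex.ofReal
      = U * Matrix.diagonal (fun p => Complex.exp (-(s • starRingEnd ℂ (lam p)))) * Uᴴ := by
    rw [map_exp_matrix, hsmul Lᵀ _ hLT, hconj]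
  have hdd : ∀ p : Fin n,
      Complex.exp (-(s • lam p)) * Complex.exp (-(s • starRingEnd ℂ (lam p)))
        = ((Real.exp (-(2 * (lam p).re * s)) : ℝ) : ℂ) := by
    intro p
    rw [← Complex.exp_add, Complex.ofReal_exp]
    congr 1
    rw [Complex.real_smul, Complex.real_smul, ← neg_add, ← mul_add, Complex.add_conj]
    push_cast
    ring
  have hprod : ((NormedSpace.exp (-(s • L))) * (NormedSpace.exp (-(s • Lᵀ)))).map
      Complex.ofReal
      = U * Matrix.diagonal (fun p => ((Real.exp (-(2 * (lam p).re * s)) : ℝ) : ℂ)) * Uᴴ := by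
    have hmm : ((NormedSpace.exp (-(s • L))) * (NormedSpace.exp (-(s • Lᵀ)))).map
        Complex.ofReal = (NormedSpace.exp (-(s • L))).map Complex.ofReal *
          (NormedSpace.exp (-(s • Lᵀ))).map Complex.ofReal :=
      Matrix.map_mul (f := Complex.ofRealHom)
    rw [hmm, hE1, hE2]
    simp only [Matrix.mul_assoc]
    rw [← Matrix.mul_assoc Uᴴ U, hUU, Matrix.one_mul,
      ← Matrix.mul_assoc (Matrix.diagonal _), Matrix.diagonal_mul_diagonal]
    exact congrArg (fun D => U * (Matrix.diagonal D * Uᴴ)) (funext fun p => hdd p)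
  have hofReal : (((NormedSpace.exp (-(s • L))) * (NormedSpace.exp (-(s • Lᵀ)))) k k : ℂ)
      = ((∑ p, ‖u p k‖ ^ 2 * Real.exp (-(2 * (lam p).re * s)) : ℝ) : ℂ) := by
    have h := congrFun (congrFun hprod k) k
    rw [Matrix.map_apply] at h
    rw [h, Matrix.mul_apply]
    have hterm : ∀ p : Fin n, (U * Matrix.diagonal
          (fun p => ((Real.exp (-(2 * (lam p).re * s)) : ℝ) : ℂ))) k p * Uᴴ p k
        = ((‖u p k‖ ^ 2 * Real.exp (-(2 * (lam p).re * s)) : ℝ) : ℂ) := by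
      intro p
      rw [Matrix.mul_diagonal, Matrix.conjTranspose_apply]
      have hz : U k p * star (U k p) = ((‖u p k‖ ^ 2 : ℝ) : ℂ) := by
        have hUkp : U k p = u p k := rfl
        rw [hUkp, ← starRingEnd_apply, Complex.mul_conj, Complex.normSq_eq_norm_sq]
      calc U k p * ((Real.exp (-(2 * (lam p).re * s)) : ℝ) : ℂ) * star (U k p)
          = (U k p * star (U k p)) * ((Real.exp (-(2 * (lam p).re * s)) : ℝ) : ℂ) := by ring
        _ = _ := by rw [hz, ← Complex.ofReal_mul]
    rw [Finset.sum_congr rfl fun p _ => hterm p]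
    push_cast
    ring
  exact_mod_cast hofReal

/-- For a normal Laplacian `L` with `L·1 = 0`, zero a simple eigenvalue and all
other eigenvalues with positive real part, the (k,k) entry of the covariance
integral minus `t/n` converges as `t → ∞` to `∑_{p≠0} |u⁽ᵖ⁾_k|² / (2 Re λ_p)`. -/
theorem certainty_index_limit_of_normal_laplacian {n : ℕ} [NeZero n]
    (L : Matrix (Fin n) (Fin n) ℝ) (hnormal : L * Lᵀ = Lᵀ * L)
    (hL1 : L *ᵥ (fun _ => (1 : ℝ)) = 0)
    (lam : Fin n → ℂ) (u : Fin n → Fin n → ℂ)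
    (horth : ∀ p q, ∑ i, starRingEnd ℂ (u p i) * u q i = if p = q then 1 else 0)
    (heig : ∀ p, (L.map Complex.ofReal) *ᵥ u p = lam p • u p)
    (hlam0 : lam 0 = 0)
    (hu0 : u 0 = fun _ => (((Real.sqrt n)⁻¹ : ℝ) : ℂ))
    (hre : ∀ p, p ≠ 0 → 0 < (lam p).re)
    (k : Fin n) :
    Tendsto
      (fun t : ℝ =>
        (∫ s in (0 : ℝ)..t,
            ((NormedSpace.exp (-(s • L))) * (NormedSpace.exp (-(s • Lᵀ)))) k k)
          - t / n)
      atTop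
      (nhds (∑ p ∈ Finset.univ.erase 0,
        ‖u p k‖ ^ 2 / (2 * (lam p).re))) := by
  classical
  have hn : (0 : ℝ) < n := by
    exact_mod_cast Nat.pos_of_ne_zero (NeZero.ne n)
  set c : Fin n → ℝ := fun p => ‖u p k‖ ^ 2 with hc
  have hc0 : c 0 = 1 / n := by
    rw [hc]
    simp only [hu0]
    rw [Complex.norm_real, Real.norm_eq_abs, abs_of_nonneg (by positivity)]
    rw [← Real.sqrt_inv, Real.sq_sqrt (by positivity)]
    rw [one_div]
  have hkey : ∀ t : ℝ,
      (∫ s in (0 : ℝ)..t,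
          ((NormedSpace.exp (-(s • L))) * (NormedSpace.exp (-(s • Lᵀ)))) k k) - t / n
        = ∑ p ∈ Finset.univ.erase 0,
            c p * ((1 - Real.exp (-(2 * (lam p).re * t))) / (2 * (lam p).re)) := by
    intro t
    have hint : (∫ s in (0 : ℝ)..t,
        ((NormedSpace.exp (-(s • L))) * (NormedSpace.exp (-(s • Lᵀ)))) k k)
        = ∑ p, c p * ∫ s in (0:ℝ)..t, Real.exp (-(2 * (lam p).re * s)) := by
      rw [intervalIntegral.integral_congr
        (g := fun s => ∑ p, c p * Real.exp (-(2 * (lam p).re * s)))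
        (fun s _ => entry_eq L lam u horth heig k s)]
      rw [intervalIntegral.integral_finset_sum]
      · exact Finset.sum_congr rfl fun p _ => intervalIntegral.integral_const_mul _ _
      · intro p _
        exact ((Real.continuous_exp.comp (by continuity)).const_smul (c p)).intervalIntegrable _ _
    rw [hint, ← Finset.add_sum_erase _ _ (Finset.mem_univ (0 : Fin n))]
    have h0 : c 0 * ∫ s in (0:ℝ)..t, Real.exp (-(2 * (lam 0).re * s)) = t / n := by
      rw [hlam0]
      simp only [Complex.zero_re, mul_zero, zero_mul, neg_zero, Real.exp_zero]
      rw [intervalIntegral.integral_const]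
      simp [hc0]
      ring
    rw [h0]
    rw [add_sub_cancel_left]
    refine Finset.sum_congr rfl fun p hp => ?_
    have hrp : (0:ℝ) < 2 * (lam p).re := by
      have := hre p (Finset.ne_of_mem_erase hp)
      linarith
    rw [show ∀ s : ℝ, -(2 * (lam p).re * s) = -((2 * (lam p).re) * s) from fun _ => rfl]
    rw [int_exp_neg _ (ne_of_gt hrp)]
  have hlim : Tendsto
      (fun t : ℝ => ∑ p ∈ Finset.univ.erase 0,
          c p * ((1 - Real.exp (-(2 * (lam p).re * t))) / (2 * (lam p).re)))
      atTop
      (nhds (∑ p ∈ Finset.univ.erase 0, c p / (2 * (lam p).re))) := by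
    refine tendsto_finset_sum _ fun p hp => ?_
    have hrp : (0:ℝ) < 2 * (lam p).re := by
      have := hre p (Finset.ne_of_mem_erase hp)
      linarith
    have h1 : Tendsto (fun t : ℝ => Real.exp (-(2 * (lam p).re * t))) atTop (nhds 0) := by
      have h0 : Tendsto (fun t : ℝ => 2 * (lam p).re * t) atTop atTop :=
        tendsto_id.const_mul_atTop hrp
      exact Real.tendsto_exp_atBot.comp (tendsto_neg_atTop_atBot.comp h0)
    have h2 : Tendsto
        (fun t : ℝ => c p * ((1 - Real.exp (-(2 * (lam p).re * t))) / (2 * (lam p).re)))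
        atTop (nhds (c p * ((1 - 0) / (2 * (lam p).re)))) :=
      ((tendsto_const_nhds.sub h1).div_const _).const_mul _
    rw [sub_zero, mul_one_div] at h2
    exact h2
  have heq : (∑ p ∈ Finset.univ.erase 0, c p / (2 * (lam p).re))
      = ∑ p ∈ Finset.univ.erase 0, ‖u p k‖ ^ 2 / (2 * (lam p).re) := rfl
  rw [← heq]
  exact hlim.congr fun t => (hkey t).symm
end

section
/- Let L̂ be a symmetric real n×n matrix with L̂·1 = 0 and rank n − 1. Then the matrix L̂ + 1·1^T is invertible and (L̂ + 1·1^T)^{-1} = L̂^# + (1/n²)·1·1^T, where L̂^# is the group inverse of L̂. -/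
open Matrix

/-- For a symmetric `L̂` with `L̂·1 = 0`, rank `n - 1`, and group inverse `X`,
the matrix `L̂ + 11ᵀ` is invertible with inverse `X + (1/n²)·11ᵀ`. -/
theorem inverse_of_laplacian_plus_ones {n : ℕ}
    (Lh X : Matrix (Fin n) (Fin n) ℝ)
    (hsym : Lhᵀ = Lh)
    (hL1 : Lh *ᵥ (fun _ => (1 : ℝ)) = 0)
    (hrank : Lh.rank = n - 1)
    (hgi1 : Lh * X * Lh = Lh) (hgi2 : X * Lh * X = X) (hgi3 : Lh * X = X * Lh) :
    IsUnit (Lh + Matrix.of (fun _ _ => (1 : ℝ))) ∧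
      (Lh + Matrix.of (fun _ _ => (1 : ℝ)))⁻¹
        = X + (((n : ℝ) ^ 2)⁻¹) • Matrix.of (fun _ _ => (1 : ℝ)) := by
  rcases Nat.eq_zero_or_pos n with hn | hn
  · subst hn
    exact ⟨isUnit_of_subsingleton _, Subsingleton.elim _ _⟩
  have hn' : (n : ℝ) ≠ 0 := by positivity
  set J : Matrix (Fin n) (Fin n) ℝ := Matrix.of (fun _ _ => (1 : ℝ)) with hJ
  set M : Matrix (Fin n) (Fin n) ℝ := Lh + J with hM
  set Y : Matrix (Fin n) (Fin n) ℝ := X + (((n : ℝ) ^ 2)⁻¹) • J with hY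
  -- basic identities
  have hcolsum : ∀ j, ∑ i, Lh i j = 0 := by
    intro j
    have := congrFun hL1 j
    simp only [mulVec, dotProduct, mul_one, Pi.zero_apply] at this
    calc ∑ i, Lh i j = ∑ i, Lhᵀ j i := by simp [transpose_apply]
    _ = 0 := by rw [hsym]; exact this
  have hLJ : Lh * J = 0 := by
    ext i j
    have := congrFun hL1 i
    simp only [mulVec, dotProduct, mul_one, Pi.zero_apply] at this
    simp [hJ, mul_apply, this]
  have hJL : J * Lh = 0 := by
    ext i j
    simp [hJ, mul_apply, hcolsum j]
  have hJJ : J * J = (n : ℝ) • J := by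
    ext i j
    simp [hJ, mul_apply]
  have hXXL : X = X * X * Lh := by
    calc X = X * Lh * X := hgi2.symm
    _ = X * (Lh * X) := by rw [mul_assoc]
    _ = X * (X * Lh) := by rw [hgi3]
    _ = X * X * Lh := by rw [mul_assoc]
  have hLXX : X = Lh * (X * X) := by
    calc X = X * Lh * X := hgi2.symm
    _ = Lh * X * X := by rw [hgi3]
    _ = Lh * (X * X) := by rw [mul_assoc]
  have hXJ : X * J = 0 := by
    rw [hXXL, mul_assoc, mul_assoc, hLJ, mul_zero, mul_zero]
  have hJX : J * X = 0 := by
    rw [hLXX, ← mul_assoc, hJL, zero_mul]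
  -- the key algebraic identity : M * Y * M = M
  have hMY : M * Y = Lh * X + ((n : ℝ)⁻¹) • J := by
    rw [hM, hY, add_mul, mul_add, mul_add, hJX, mul_smul_comm, mul_smul_comm, hLJ,
      hJJ, smul_zero, smul_smul]
    have : ((n : ℝ) ^ 2)⁻¹ * (n : ℝ) = (n : ℝ)⁻¹ := by
      field_simp
    rw [this]
    abel
  have hMYM : M * Y * M = M := by
    rw [hMY, hM, add_mul, mul_add, mul_add, smul_mul_assoc, smul_mul_assoc, hJL, hJJ,
      mul_assoc Lh X J, hXJ, mul_zero, hgi1, smul_zero, smul_smul, inv_mul_cancel₀ hn', one_smul]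
    abel
  -- kernel of Lh is the span of the all-ones vector
  have hone_ne : (fun _ => (1 : ℝ) : Fin n → ℝ) ≠ 0 := by
    intro h
    have := congrFun h ⟨0, hn⟩
    simpa using this
  have hker : LinearMap.ker Lh.mulVecLin = Submodule.span ℝ {(fun _ => (1 : ℝ) : Fin n → ℝ)} := by
    symm
    apply Submodule.eq_of_le_of_finrank_le
    · rw [Submodule.span_le, Set.singleton_subset_iff]
      simp only [SetLike.mem_coe, LinearMap.mem_ker, Matrix.mulVecLin_apply]
      exact hL1
    · have hrn : Module.finrank ℝ (LinearMap.range Lh.mulVecLin)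
          + Module.finrank ℝ (LinearMap.ker Lh.mulVecLin) = n := by
        simpa using LinearMap.finrank_range_add_finrank_ker Lh.mulVecLin
      have : Module.finrank ℝ (LinearMap.range Lh.mulVecLin) = n - 1 := hrank
      have hkd : Module.finrank ℝ (LinearMap.ker Lh.mulVecLin) = 1 := by omega
      rw [hkd, finrank_span_singleton hone_ne]
  -- M has injective mulVec
  have hinj : Function.Injective M.mulVec := by
    rw [← Matrix.coe_mulVecLin, ← LinearMap.ker_eq_bot, Submodule.eq_bot_iff]
    intro v hv
    rw [LinearMap.mem_ker, Matrix.mulVecLin_apply, hM, Matrix.add_mulVec] at hv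
    have hJv : J *ᵥ v = fun _ => ∑ j, v j := by
      ext i
      simp [hJ, mulVec, dotProduct]
    have hsum : ∑ i, ((Lh *ᵥ v) i + (J *ᵥ v) i) = 0 := by
      have := fun i => congrFun hv i
      simp only [Pi.add_apply, Pi.zero_apply] at this
      simp [this]
    have hLsum : ∑ i, (Lh *ᵥ v) i = 0 := by
      simp only [mulVec, dotProduct]
      rw [Finset.sum_comm]
      simp [← Finset.sum_mul, hcolsum]
    have hs : ∑ j, v j = 0 := by
      rw [Finset.sum_add_distrib, hLsum, zero_add, hJv] at hsum
      simp only [Finset.sum_const, Finset.card_univ, Fintype.card_fin, nsmul_eq_mul] at hsum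
      exact (mul_eq_zero.mp hsum).resolve_left hn'
    have hJv0 : J *ᵥ v = 0 := by
      rw [hJv, hs]; rfl
    have hLv : Lh *ᵥ v = 0 := by
      rw [hJv0, add_zero] at hv; exact hv
    have hvmem : v ∈ Submodule.span ℝ {(fun _ => (1 : ℝ) : Fin n → ℝ)} := by
      rw [← hker, LinearMap.mem_ker, Matrix.mulVecLin_apply]; exact hLv
    obtain ⟨c, hc⟩ := Submodule.mem_span_singleton.mp hvmem
    have hc0 : c * n = 0 := by
      rw [← hs, ← hc]
      simp [Finset.mul_sum]
      ring
    have : c = 0 := (mul_eq_zero.mp hc0).resolve_right hn'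
    rw [← hc, this, zero_smul]
  have hunit : IsUnit M := Matrix.mulVec_injective_iff_isUnit.mp hinj
  have h1 : M * M⁻¹ = 1 := Matrix.mul_nonsing_inv _ ((Matrix.isUnit_iff_isUnit_det M).mp hunit)
  have hMY1 : M * Y = 1 := by
    calc M * Y = M * Y * (M * M⁻¹) := by rw [h1, mul_one]
    _ = (M * Y * M) * M⁻¹ := by simp only [mul_assoc]
    _ = M * M⁻¹ := by rw [hMYM]
    _ = 1 := h1
  exact ⟨hunit, Matrix.inv_eq_right_inv hMY1⟩
end

section
/- Let L̂ be a symmetric real n×n matrix with L̂·1 = 0 and rank n − 1, let C = (L̂ + 1·1^T)^{-1}, and define for each k the quantity 1/κ(k) := (1/n)·∑_{j=1}^n (c_{kk} + c_{jj} − 2c_{kj}). Then 1/κ(k) = L̂^#_{kk} + (1/n)·trace(L̂^#), equivalently (2/σ²)·(1/μ(k)) = 1/κ(k) − K_f/n², where 1/μ(k) = (σ²/2)·L̂^#_{kk} and K_f = n·trace(L̂^#). -/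
open Matrix Finset

/-- Main theorem relating node certainty and information centrality: with
`C = (L̂ + 11ᵀ)⁻¹` the Stephenson–Zelen information matrix, for every node `k`,
`1/κ(k) = (1/n)·∑_j (c_kk + c_jj − 2 c_kj) = L̂^#_kk + trace(L̂^#)/n`;
equivalently `(2/σ²)·(1/μ(k)) = 1/κ(k) − K_f/n²` where
`1/μ(k) = (σ²/2)·L̂^#_kk` and `K_f = n·trace(L̂^#)`. -/
theorem info_centrality_eq_certainty {n : ℕ}
    (Lh X : Matrix (Fin n) (Fin n) ℝ)
    (hsym : Lhᵀ = Lh)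
    (hL1 : Lh *ᵥ (fun _ => (1 : ℝ)) = 0)
    (hrank : Lh.rank = n - 1)
    (hgi1 : Lh * X * Lh = Lh) (hgi2 : X * Lh * X = X) (hgi3 : Lh * X = X * Lh)
    (C : Matrix (Fin n) (Fin n) ℝ)
    (hC : C = (Lh + Matrix.of (fun _ _ => (1 : ℝ)))⁻¹)
    (σ : ℝ) (hσ : 0 < σ) (k : Fin n) :
    (1 / n) * (∑ j, (C k k + C j j - 2 * C k j))
        = X k k + X.trace / n ∧
    (2 / σ ^ 2) * ((σ ^ 2 / 2) * X k k)
        = (1 / n) * (∑ j, (C k k + C j j - 2 * C k j))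
          - ((n : ℝ) * X.trace) / n ^ 2 := by
  have hn : 0 < n := k.pos
  have hnR : (n : ℝ) ≠ 0 := Nat.cast_ne_zero.mpr hn.ne'
  set J : Matrix (Fin n) (Fin n) ℝ := Matrix.of (fun _ _ => (1 : ℝ)) with hJ
  set v1 : Fin n → ℝ := fun _ => (1 : ℝ) with hv1
  -- X = X * X * Lh and X = Lh * X * X
  have hX2 : X = X * X * Lh := by
    conv_lhs => rw [← hgi2]
    rw [mul_assoc, hgi3, ← mul_assoc]
  have hX3 : X = Lh * X * X := by
    conv_lhs => rw [← hgi2]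
    rw [← hgi3]
  -- row sums of X vanish
  have hX1 : X *ᵥ v1 = 0 := by
    rw [hX2, ← Matrix.mulVec_mulVec, ← Matrix.mulVec_mulVec, hL1,
      Matrix.mulVec_zero, Matrix.mulVec_zero]
  -- basic products with J
  have hLJ : Lh * J = 0 := by
    ext i j
    have := congrFun hL1 i
    simpa [Matrix.mul_apply, hJ, Matrix.mulVec, dotProduct, hv1] using this
  have hJL : J * Lh = 0 := by
    have h1 : Lhᵀ *ᵥ v1 = 0 := by rw [hsym]; exact hL1
    ext i j
    have := congrFun h1 j
    simpa [Matrix.mul_apply, hJ, Matrix.mulVec, dotProduct, hv1,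
      Matrix.transpose_apply] using this
  have hXJ : X * J = 0 := by
    ext i j
    have := congrFun hX1 i
    simpa [Matrix.mul_apply, hJ, Matrix.mulVec, dotProduct, hv1] using this
  have hJX : J * X = 0 := by
    rw [hX3, ← mul_assoc, ← mul_assoc, hJL, Matrix.zero_mul, Matrix.zero_mul]
  have hJJ : J * J = (n : ℝ) • J := by
    ext i j
    simp [Matrix.mul_apply, hJ, hv1]
  set M : Matrix (Fin n) (Fin n) ℝ := Lh + J with hM
  -- the kernel of Lh is spanned by the all-ones vector
  have hv1ker : v1 ∈ LinearMap.ker Lh.mulVecLin := by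
    simpa [Matrix.mulVecLin_apply, hv1] using hL1
  have hv1ne : v1 ≠ 0 := by
    intro h
    have := congrFun h k
    simp [hv1] at this
  have hker : ∀ v, Lh *ᵥ v = 0 → ∃ c : ℝ, v = c • v1 := by
    have hrn : Module.finrank ℝ (LinearMap.range Lh.mulVecLin)
        + Module.finrank ℝ (LinearMap.ker Lh.mulVecLin) = n := by
      simpa using LinearMap.finrank_range_add_finrank_ker Lh.mulVecLin
    have hkerdim : Module.finrank ℝ (LinearMap.ker Lh.mulVecLin) = 1 := by
      have : Lh.rank + Module.finrank ℝ (LinearMap.ker Lh.mulVecLin) = n := hrn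
      rw [hrank] at this
      omega
    have hspan : (Submodule.span ℝ {v1}) = LinearMap.ker Lh.mulVecLin := by
      apply Submodule.eq_of_le_of_finrank_le
      · rw [Submodule.span_le, Set.singleton_subset_iff]; exact hv1ker
      · rw [hkerdim, finrank_span_singleton hv1ne]
    intro v hv
    have hvmem : v ∈ Submodule.span ℝ {v1} := by
      rw [hspan]
      simpa [Matrix.mulVecLin_apply] using hv
    obtain ⟨c, hc⟩ := Submodule.mem_span_singleton.mp hvmem
    exact ⟨c, hc.symm⟩
  -- M is invertible
  have hMinj : ∀ v, M *ᵥ v = 0 → v = 0 := by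
    intro v hv
    have hsum : ∑ i, v i = 0 := by
      have h0 : v1 ⬝ᵥ (M *ᵥ v) = 0 := by rw [hv]; simp
      have h1 : v1 ⬝ᵥ (Lh *ᵥ v) = 0 := by
        rw [Matrix.dotProduct_mulVec, ← Matrix.mulVec_transpose, hsym, hL1]
        simp
      have h2 : v1 ⬝ᵥ (J *ᵥ v) = (n : ℝ) * ∑ i, v i := by
        simp [dotProduct, Matrix.mulVec, hJ, hv1, Finset.mul_sum]
      rw [hM, Matrix.add_mulVec, dotProduct_add, h1, h2, zero_add] at h0
      exact (mul_eq_zero.mp h0).resolve_left hnR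
    have hJv : J *ᵥ v = 0 := by
      ext i
      simpa [Matrix.mulVec, dotProduct, hJ, hv1] using hsum
    have hLv : Lh *ᵥ v = 0 := by
      have := hv
      rw [hM, Matrix.add_mulVec, hJv, add_zero] at this
      exact this
    obtain ⟨c, hc⟩ := hker v hLv
    have : c * n = 0 := by
      rw [hc] at hsum
      simpa [hv1, Finset.mul_sum, mul_comm] using hsum
    have hc0 : c = 0 := (mul_eq_zero.mp this).resolve_right hnR
    rw [hc, hc0, zero_smul]
  have hMunit : IsUnit M := by
    rw [← Matrix.mulVec_injective_iff_isUnit]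
    change Function.Injective M.mulVecLin
    rw [← LinearMap.ker_eq_bot, LinearMap.ker_eq_bot']
    intro v hv
    exact hMinj v (by simpa [Matrix.mulVecLin_apply] using hv)
  -- the candidate inverse
  set c : ℝ := ((n : ℝ) ^ 2)⁻¹ with hc
  set Y : Matrix (Fin n) (Fin n) ℝ := X + c • J with hY
  have hMY : M * Y = Lh * X + (c * n) • J := by
    rw [hM, hY, Matrix.add_mul, Matrix.mul_add, Matrix.mul_add,
      Matrix.mul_smul, Matrix.mul_smul, hLJ, hJX, hJJ, smul_smul, mul_comm c]
    simp [mul_comm]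
  have hMYM : M * Y * M = M := by
    rw [hMY, hM, Matrix.add_mul, Matrix.mul_add, Matrix.mul_add,
      Matrix.smul_mul, Matrix.smul_mul, hgi1, hJL, hJJ, mul_assoc,
      hXJ, Matrix.mul_zero, smul_zero, smul_smul]
    have h1 : c * (n : ℝ) * (n : ℝ) = 1 := by
      rw [hc]; field_simp
    rw [h1, one_smul]
    simp
  have hdet : IsUnit M.det := (Matrix.isUnit_iff_isUnit_det M).mp hMunit
  have hCY : C = Y := by
    have h1 : M⁻¹ * (M * Y * M) * M⁻¹ = Y := by
      simp only [← mul_assoc]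
      rw [Matrix.nonsing_inv_mul M hdet, one_mul, mul_assoc,
        Matrix.mul_nonsing_inv M hdet, mul_one]
    have h2 : M⁻¹ * (M * Y * M) * M⁻¹ = M⁻¹ := by
      rw [hMYM, Matrix.nonsing_inv_mul M hdet, one_mul]
    rw [hC, ← h2, h1]
  -- entrywise description of C
  have hCij : ∀ i j, C i j = X i j + c := by
    intro i j
    rw [hCY, hY]
    simp [hJ, hv1]
  -- the sum
  have hrowsum : ∑ j, X k j = 0 := by
    have := congrFun hX1 k
    simpa [Matrix.mulVec, dotProduct, hv1] using this
  have hsum : ∑ j, (C k k + C j j - 2 * C k j)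
      = (n : ℝ) * X k k + X.trace := by
    have : ∀ j, C k k + C j j - 2 * C k j = X k k + X j j - 2 * X k j := by
      intro j
      rw [hCij, hCij, hCij]; ring
    rw [Finset.sum_congr rfl (fun j _ => this j)]
    have h2 : ∑ j, (X k k + X j j - 2 * X k j)
        = (∑ _j : Fin n, X k k) + (∑ j, X j j) - 2 * ∑ j, X k j := by
      rw [Finset.sum_sub_distrib, Finset.sum_add_distrib, Finset.mul_sum]
    rw [h2, hrowsum, Finset.sum_const, Finset.card_univ]
    simp [Matrix.trace, Matrix.diag, nsmul_eq_mul]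
  have hσ2 : σ ^ 2 ≠ 0 := pow_ne_zero 2 hσ.ne'
  constructor
  · rw [hsum]; field_simp
  · rw [hsum]; field_simp; ring
end

section
/- For the complete graph on n ≥ 2 vertices with uniform edge weight α > 0 and σ = 1, the covariance matrix ∫₀^t exp(-Ls) exp(-L^T s) ds equals ((1 − exp(-2nαt))/(2nα))·I + (t/n − (1 − exp(-2nαt))/(2n²α))·1·1^T, and hence each diagonal entry minus t/n converges as t → ∞ to (n−1)/(2αn²); i.e., μ(v_k) = 2αn²/(n−1) for every node. -/
open Matrix Filter

attribute [local instance] Matrix.linftyOpNormedRing Matrix.linftyOpNormedAlgebra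

lemma exp_smul_idem {m : ℕ} (Q : Matrix (Fin m) (Fin m) ℝ) (hQ : Q * Q = Q) (c : ℝ) :
    NormedSpace.exp (c • Q) = 1 + (Real.exp c - 1) • Q := by
  have hQpow : ∀ k : ℕ, Q ^ (k + 1) = Q := by
    intro k
    induction k with
    | zero => simp
    | succ k ih => rw [pow_succ, ih, hQ]
  have hsum : Summable fun k : ℕ => ((k.factorial : ℝ)⁻¹) • (c • Q) ^ k :=
    NormedSpace.expSeries_summable' (𝕂 := ℝ) (c • Q)
  have hre : Summable fun k : ℕ => c ^ k / (k.factorial : ℝ) :=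
    Real.summable_pow_div_factorial c
  have hre1 : Summable fun k : ℕ => c ^ (k + 1) / ((k + 1).factorial : ℝ) :=
    (summable_nat_add_iff 1).2 hre
  rw [NormedSpace.exp_eq_tsum (𝕂 := ℝ)]
  simp only []
  rw [Summable.tsum_eq_zero_add hsum]
  have h1 : ∀ k : ℕ, (((k + 1).factorial : ℝ)⁻¹) • (c • Q) ^ (k + 1)
      = (c ^ (k + 1) / ((k + 1).factorial : ℝ)) • Q := by
    intro k
    rw [smul_pow, hQpow, smul_smul]
    congr 1
    rw [div_eq_inv_mul]
  rw [tsum_congr h1, Summable.tsum_smul_const hre1]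
  have hexp : Real.exp c = 1 + ∑' k : ℕ, c ^ (k + 1) / ((k + 1).factorial : ℝ) := by
    have : Real.exp c = ∑' k : ℕ, c ^ k / (k.factorial : ℝ) := by
      rw [Real.exp_eq_exp_ℝ, NormedSpace.exp_eq_tsum_div]
    rw [this, Summable.tsum_eq_zero_add hre]
    simp
  simp [hexp]

/-- For the complete graph on `n ≥ 2` vertices with uniform weight `α > 0` and
`σ = 1`, the covariance integral `∫₀ᵗ exp(-Ls) exp(-Lᵀs) ds` equals
`((1 − e^{-2nαt})/(2nα))·I + (t/n − (1 − e^{-2nαt})/(2n²α))·11ᵀ`, and each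
diagonal entry minus `t/n` converges to `(n−1)/(2αn²)`, i.e.
`μ(v_k) = 2αn²/(n−1)`. -/
theorem complete_graph_covariance_and_certainty {n : ℕ} (hn : 2 ≤ n)
    (α : ℝ) (hα : 0 < α)
    (L : Matrix (Fin n) (Fin n) ℝ)
    (hL : L = α • ((n : ℝ) • (1 : Matrix (Fin n) (Fin n) ℝ)
        - Matrix.of (fun _ _ => (1 : ℝ)))) :
    (∀ t : ℝ, ∀ k j : Fin n,
      (∫ s in (0 : ℝ)..t,
          ((NormedSpace.exp (-(s • L))) * (NormedSpace.exp (-(s • Lᵀ)))) k j)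
        = ((1 - Real.exp (-(2 * n * α * t))) / (2 * n * α)) * (if k = j then 1 else 0)
          + (t / n - (1 - Real.exp (-(2 * n * α * t))) / (2 * n ^ 2 * α))) ∧
    (∀ k : Fin n,
      Tendsto
        (fun t : ℝ =>
          (∫ s in (0 : ℝ)..t,
              ((NormedSpace.exp (-(s • L))) * (NormedSpace.exp (-(s • Lᵀ)))) k k)
            - t / n)
        atTop (nhds (((n : ℝ) - 1) / (2 * α * n ^ 2)))) := by
  have hn0 : (0 : ℝ) < n := by exact_mod_cast (by omega : 0 < n)
  have hnne : (n : ℝ) ≠ 0 := ne_of_gt hn0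
  set J : Matrix (Fin n) (Fin n) ℝ := Matrix.of (fun _ _ => (1 : ℝ)) with hJdef
  set Q : Matrix (Fin n) (Fin n) ℝ := 1 - (n : ℝ)⁻¹ • J with hQdef
  have hJJ : J * J = (n : ℝ) • J := by
    ext i j
    simp [hJdef, Matrix.mul_apply, Matrix.smul_apply]
  have hPP : ((n : ℝ)⁻¹ • J) * ((n : ℝ)⁻¹ • J) = (n : ℝ)⁻¹ • J := by
    rw [smul_mul_smul_comm, hJJ, smul_smul]
    congr 1
    field_simp
  have hQQ : Q * Q = Q := by
    rw [hQdef, sub_mul, mul_sub, mul_sub, hPP]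
    simp only [one_mul, mul_one]
    abel
  have hLt : Lᵀ = L := by
    rw [hL]
    ext i j
    by_cases h : i = j <;>
      simp [hJdef, Matrix.of_apply, Matrix.transpose_apply, Matrix.one_apply,
        Matrix.smul_apply, Matrix.sub_apply, h, eq_comm]
  have hL2 : L = (α * n) • Q := by
    rw [hL, hQdef, smul_sub, smul_sub, smul_smul, smul_smul]
    congr 2
    rw [show α * (n : ℝ) * (n : ℝ)⁻¹ = α from by field_simp]
  have hsL : ∀ s : ℝ, -(s • L) = (-(s * (α * n))) • Q := by
    intro s
    rw [hL2, smul_smul, ← neg_smul]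
  have hprod : ∀ s : ℝ,
      (NormedSpace.exp (-(s • L))) * (NormedSpace.exp (-(s • Lᵀ)))
        = 1 + (Real.exp (-(2 * n * α * s)) - 1) • Q := by
    intro s
    rw [hLt, hsL s, exp_smul_idem Q hQQ]
    set b := Real.exp (-(s * (α * n))) - 1 with hb
    have hmul : (1 + b • Q) * (1 + b • Q) = 1 + (b + b + b * b) • Q := by
      rw [add_mul, mul_add, mul_add, smul_mul_smul_comm, hQQ, add_smul, add_smul]
      simp only [one_mul, mul_one]
      abel
    rw [hmul]
    congr 2
    have h2 : Real.exp (-(2 * n * α * s))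
        = Real.exp (-(s * (α * n))) * Real.exp (-(s * (α * n))) := by
      rw [← Real.exp_add]
      ring_nf
    rw [h2, hb]
    ring
  have hent : ∀ s : ℝ, ∀ k j : Fin n,
      ((NormedSpace.exp (-(s • L))) * (NormedSpace.exp (-(s • Lᵀ)))) k j
        = ((if k = j then (1 : ℝ) else 0) - (n : ℝ)⁻¹) * Real.exp (-(2 * n * α * s))
          + (n : ℝ)⁻¹ := by
    intro s k j
    rw [hprod s]
    simp only [hQdef, hJdef, Matrix.add_apply, Matrix.one_apply, Matrix.smul_apply,
      Matrix.sub_apply, Matrix.of_apply, smul_eq_mul]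
    ring
  have hcne : (2 * (n : ℝ) * α) ≠ 0 := by positivity
  have hexint : ∀ t : ℝ, (∫ s in (0 : ℝ)..t, Real.exp (-(2 * n * α * s)))
      = (1 - Real.exp (-(2 * n * α * t))) / (2 * n * α) := by
    intro t
    have h1 : ∀ s : ℝ, -(2 * (n : ℝ) * α * s) = (-(2 * (n : ℝ) * α)) * s := fun s => by ring
    simp_rw [h1]
    rw [intervalIntegral.integral_comp_mul_left Real.exp (neg_ne_zero.mpr hcne),
      integral_exp]
    rw [mul_zero, Real.exp_zero, smul_eq_mul]
    rw [show (-(2 * (n : ℝ) * α)) * t = -(2 * (n : ℝ) * α * t) from by ring]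
    field_simp
    ring
  have hint : ∀ t : ℝ, ∀ k j : Fin n,
      (∫ s in (0 : ℝ)..t,
          ((NormedSpace.exp (-(s • L))) * (NormedSpace.exp (-(s • Lᵀ)))) k j)
        = ((if k = j then (1 : ℝ) else 0) - (n : ℝ)⁻¹)
            * ((1 - Real.exp (-(2 * n * α * t))) / (2 * n * α)) + t * (n : ℝ)⁻¹ := by
    intro t k j
    have hi1 : IntervalIntegrable
        (fun s : ℝ => ((if k = j then (1 : ℝ) else 0) - (n : ℝ)⁻¹)
          * Real.exp (-(2 * n * α * s))) MeasureTheory.volume 0 t := by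
      apply Continuous.intervalIntegrable
      fun_prop
    have hi2 : IntervalIntegrable (fun _ : ℝ => (n : ℝ)⁻¹) MeasureTheory.volume 0 t :=
      intervalIntegrable_const
    simp_rw [hent]
    rw [intervalIntegral.integral_add hi1 hi2, intervalIntegral.integral_const_mul,
      hexint t, intervalIntegral.integral_const, smul_eq_mul]
    ring
  have hmain : ∀ t : ℝ, ∀ k j : Fin n,
      (∫ s in (0 : ℝ)..t,
          ((NormedSpace.exp (-(s • L))) * (NormedSpace.exp (-(s • Lᵀ)))) k j)
        = ((1 - Real.exp (-(2 * n * α * t))) / (2 * n * α)) * (if k = j then 1 else 0)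
          + (t / n - (1 - Real.exp (-(2 * n * α * t))) / (2 * n ^ 2 * α)) := by
    intro t k j
    rw [hint t k j]
    by_cases h : k = j <;> simp only [h, if_true, if_false] <;> field_simp <;> ring
  refine ⟨hmain, ?_⟩
  intro k
  have hfun : ∀ t : ℝ,
      (∫ s in (0 : ℝ)..t,
          ((NormedSpace.exp (-(s • L))) * (NormedSpace.exp (-(s • Lᵀ)))) k k) - t / n
        = (1 - Real.exp (-(2 * n * α * t))) / (2 * n * α)
          - (1 - Real.exp (-(2 * n * α * t))) / (2 * n ^ 2 * α) := by
    intro t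
    rw [hmain t k k]
    simp
    ring
  have h0 : Tendsto (fun t : ℝ => 2 * (n : ℝ) * α * t) atTop atTop := by
    apply Tendsto.const_mul_atTop (by positivity : (0:ℝ) < 2 * (n : ℝ) * α) tendsto_id
  have h1 : Tendsto (fun t : ℝ => -(2 * (n : ℝ) * α * t)) atTop atBot :=
    tendsto_neg_atTop_atBot.comp h0
  have hE : Tendsto (fun t : ℝ => Real.exp (-(2 * (n : ℝ) * α * t))) atTop (nhds 0) :=
    Real.tendsto_exp_atBot.comp h1
  have hlim : Tendsto
      (fun t : ℝ => (1 - Real.exp (-(2 * n * α * t))) / (2 * n * α)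
        - (1 - Real.exp (-(2 * n * α * t))) / (2 * n ^ 2 * α)) atTop
      (nhds ((1 - 0) / (2 * n * α) - (1 - 0) / (2 * n ^ 2 * α))) :=
    ((hE.const_sub 1).div_const _).sub ((hE.const_sub 1).div_const _)
  have hval : ((n : ℝ) - 1) / (2 * α * n ^ 2)
      = (1 - 0) / (2 * (n : ℝ) * α) - (1 - 0) / (2 * (n : ℝ) ^ 2 * α) := by
    field_simp
    ring
  rw [hval]
  exact Tendsto.congr (fun t => (hfun t).symm) hlim
end
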